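/- arXiv:2206.05334 — 2 statements merged into one kernel-verified Lean document; each statement's English description precedes it below -/
import Mathlib

section
/- For every positive integer n, (1/n)·∑_{ℓ=0}^{n-1} (cos((1+4ℓ)π/(4n)))^{4n} = (1/16^n)·[C(4n,2n) − 2]. -/
open Real Finset Complex

noncomputable def zz (n k : ℕ) : ℂ :=
  Complex.exp ((2 * (k:ℤ) - 4 * n) * Real.pi / n * Complex.I)

noncomputable def cc (n k : ℕ) : ℂ :=
  Complex.exp ((2 * (k:ℤ) - 4 * n) * Real.pi / (4 * n) * Complex.I)

lemma geomsum (n k : ℕ) (hn : 0 < n) :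
    ∑ ℓ ∈ range n, zz n k ^ ℓ = if n ∣ k then (n:ℂ) else 0 := by
  have hn' : (n:ℂ) ≠ 0 := by exact_mod_cast hn.ne'
  by_cases h : n ∣ k
  · have hz : zz n k = 1 := by
      obtain ⟨m, hm⟩ := h
      rw [zz]
      have he : ((2 * (k:ℤ) - 4 * n) * Real.pi / n * Complex.I)
          = (((m:ℤ) - 2 : ℤ) : ℂ) * (2 * Real.pi * Complex.I) := by
        field_simp
        push_cast [hm]
        ring
      rw [he, Complex.exp_int_mul_two_pi_mul_I]
    simp [hz, h]
  · have hz1 : zz n k ≠ 1 := by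
      rw [zz, Ne, Complex.exp_eq_one_iff]
      rintro ⟨m, hm⟩
      apply h
      have hπ : (Real.pi : ℂ) ≠ 0 := by exact_mod_cast Real.pi_ne_zero
      have h2 : ((2 * (k:ℤ) - 4 * n : ℤ) : ℂ) * ((Real.pi : ℂ) * Complex.I)
          = ((2 * m * n : ℤ) : ℂ) * ((Real.pi : ℂ) * Complex.I) := by
        field_simp at hm
        push_cast at hm ⊢
        linear_combination ((Real.pi:ℂ) * Complex.I) * hm
      have key := mul_right_cancel₀ (mul_ne_zero hπ Complex.I_ne_zero) h2
      have key2 : (2 * (k:ℤ) - 4 * n) = 2 * m * n := by exact_mod_cast key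
      have : (k:ℤ) = n * (m + 2) := by linarith
      have : (n:ℤ) ∣ (k:ℤ) := ⟨m + 2, this⟩
      exact_mod_cast this
    have hzn : zz n k ^ n = 1 := by
      rw [zz, ← Complex.exp_nat_mul]
      have he : (n:ℂ) * ((2 * (k:ℤ) - 4 * n) * Real.pi / n * Complex.I)
          = (((k:ℤ) - 2 * n : ℤ) : ℂ) * (2 * Real.pi * Complex.I) := by
        field_simp
        push_cast
        ring
      rw [he, Complex.exp_int_mul_two_pi_mul_I]
    rw [geom_sum_eq hz1, hzn]
    simp [h]

lemma cospow (n : ℕ) (θ : ℝ) :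
    (Real.cos θ : ℂ) ^ (4*n) * 2 ^ (4*n)
      = ∑ k ∈ range (4*n+1),
          (Nat.choose (4*n) k : ℂ) * Complex.exp ((2*(k:ℤ) - 4*n) * θ * Complex.I) := by
  have h1 : (Real.cos θ : ℂ) * 2 = Complex.exp (θ * Complex.I) + Complex.exp (-(θ * Complex.I)) := by
    rw [Complex.ofReal_cos, Complex.cos]
    ring
  calc (Real.cos θ : ℂ) ^ (4*n) * 2 ^ (4*n)
      = ((Real.cos θ : ℂ) * 2) ^ (4*n) := by ring
    _ = (Complex.exp (θ * Complex.I) + Complex.exp (-(θ * Complex.I))) ^ (4*n) := by rw [h1]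
    _ = ∑ k ∈ range (4*n+1), Complex.exp (θ * Complex.I) ^ k *
          Complex.exp (-(θ * Complex.I)) ^ (4*n - k) * (Nat.choose (4*n) k : ℂ) := add_pow _ _ _
    _ = _ := by
        refine Finset.sum_congr rfl fun k hk => ?_
        have hk' : k ≤ 4*n := by simpa [Nat.lt_succ_iff] using Finset.mem_range.mp hk
        rw [← Complex.exp_nat_mul, ← Complex.exp_nat_mul, ← Complex.exp_add]
        rw [mul_comm]
        congr 1
        push_cast [hk']
        ring

lemma filter_eq (n : ℕ) (hn : 0 < n) :
    (range (4*n+1)).filter (n ∣ ·) = (range 5).image (· * n) := by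
  ext k
  simp only [mem_filter, mem_range, mem_image, Nat.lt_succ_iff]
  constructor
  · rintro ⟨hk, m, rfl⟩
    refine ⟨m, ?_, (mul_comm m n)⟩
    by_contra hm
    push_neg at hm
    nlinarith
  · rintro ⟨m, hm, rfl⟩
    exact ⟨by nlinarith, dvd_mul_left n m⟩

lemma expIR (x : ℝ) : Complex.exp ((x:ℂ) * Complex.I)
    = (Real.cos x : ℂ) + (Real.sin x : ℂ) * Complex.I := by
  rw [Complex.exp_mul_I, Complex.ofReal_cos, Complex.ofReal_sin]

lemma ccval (n m : ℕ) (hn : 0 < n) :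
    cc n (m*n) = Complex.exp (((((m:ℝ) - 2) * Real.pi / 2 : ℝ) : ℂ) * Complex.I) := by
  have hn' : (n:ℂ) ≠ 0 := by exact_mod_cast hn.ne'
  rw [cc]
  congr 1
  push_cast
  field_simp
  ring

lemma mainC (n : ℕ) (hn : 0 < n) :
    (∑ ℓ ∈ range n, (Real.cos ((1 + 4*(ℓ:ℝ)) * Real.pi / (4*(n:ℝ))) : ℂ) ^ (4*n)) * 2 ^ (4*n)
      = n * ((Nat.choose (4*n) (2*n) : ℂ) - 2) := by
  have hn' : (n:ℂ) ≠ 0 := by exact_mod_cast hn.ne'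
  have inner : ∀ k : ℕ, ∀ ℓ : ℕ,
      Complex.exp ((2*(k:ℤ) - 4*n) * ((1 + 4*(ℓ:ℝ)) * Real.pi / (4*(n:ℝ)) : ℝ) * Complex.I)
        = cc n k * zz n k ^ ℓ := by
    intro k ℓ
    rw [cc, zz, ← Complex.exp_nat_mul, ← Complex.exp_add]
    congr 1
    push_cast
    field_simp
  rw [Finset.sum_mul]
  calc ∑ ℓ ∈ range n, (Real.cos ((1 + 4*(ℓ:ℝ)) * Real.pi / (4*(n:ℝ))) : ℂ) ^ (4*n) * 2 ^ (4*n)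
      = ∑ ℓ ∈ range n, ∑ k ∈ range (4*n+1), (Nat.choose (4*n) k : ℂ) *
          Complex.exp ((2*(k:ℤ) - 4*n) * ((1 + 4*(ℓ:ℝ)) * Real.pi / (4*(n:ℝ)) : ℝ) * Complex.I) :=
        Finset.sum_congr rfl fun ℓ _ => cospow n _
    _ = ∑ k ∈ range (4*n+1), ∑ ℓ ∈ range n, (Nat.choose (4*n) k : ℂ) *
          Complex.exp ((2*(k:ℤ) - 4*n) * ((1 + 4*(ℓ:ℝ)) * Real.pi / (4*(n:ℝ)) : ℝ) * Complex.I) :=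
        Finset.sum_comm
    _ = ∑ k ∈ range (4*n+1), (Nat.choose (4*n) k : ℂ) * (cc n k * (if n ∣ k then (n:ℂ) else 0)) := by
        refine Finset.sum_congr rfl fun k _ => ?_
        rw [← Finset.mul_sum]
        congr 1
        rw [← geomsum n k hn, Finset.mul_sum]
        exact Finset.sum_congr rfl fun ℓ _ => inner k ℓ
    _ = ∑ k ∈ range (4*n+1), (if n ∣ k then (Nat.choose (4*n) k : ℂ) * cc n k * n else 0) := by
        refine Finset.sum_congr rfl fun k _ => ?_
        split_ifs with h <;> ring
    _ = ∑ k ∈ (range (4*n+1)).filter (n ∣ ·), (Nat.choose (4*n) k : ℂ) * cc n k * n :=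
        (Finset.sum_filter _ _).symm
    _ = ∑ m ∈ range 5, (Nat.choose (4*n) (m*n) : ℂ) * cc n (m*n) * n := by
        rw [filter_eq n hn, Finset.sum_image]
        intro a _ b _ hab
        exact Nat.eq_of_mul_eq_mul_right hn hab
    _ = n * ((Nat.choose (4*n) (2*n) : ℂ) - 2) := by
        have v0 : cc n (0*n) = -1 := by
          rw [ccval n 0 hn]
          have : (((0:ℕ):ℝ) - 2) * Real.pi / 2 = -Real.pi := by push_cast; ring
          rw [this]
          rw [expIR]
          simp
        have v1 : cc n (1*n) = -Complex.I := by
          rw [ccval n 1 hn]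
          have : (((1:ℕ):ℝ) - 2) * Real.pi / 2 = -(Real.pi/2) := by push_cast; ring
          rw [this]
          rw [expIR]
          simp
        have v2 : cc n (2*n) = 1 := by
          rw [ccval n 2 hn]
          have : (((2:ℕ):ℝ) - 2) * Real.pi / 2 = 0 := by push_cast; ring
          rw [this]
          simp
        have v3 : cc n (3*n) = Complex.I := by
          rw [ccval n 3 hn]
          have : (((3:ℕ):ℝ) - 2) * Real.pi / 2 = Real.pi/2 := by push_cast; ring
          rw [this]
          rw [expIR]
          simp
        have v4 : cc n (4*n) = -1 := by
          rw [ccval n 4 hn]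
          have : (((4:ℕ):ℝ) - 2) * Real.pi / 2 = Real.pi := by push_cast; ring
          rw [this]
          rw [expIR]
          simp
        have h3 : ((Nat.choose (4*n) (3*n) : ℕ) : ℂ) = ((Nat.choose (4*n) (1*n) : ℕ) : ℂ) := by
          have : Nat.choose (4*n) (3*n) = Nat.choose (4*n) (1*n) := by
            rw [← Nat.choose_symm (by omega : 3*n ≤ 4*n)]
            congr 1
            omega
          exact_mod_cast this
        simp only [Finset.sum_range_succ, Finset.sum_range_zero, zero_add]
        rw [v0, v1, v2, v3, v4, h3]
        have c0 : Nat.choose (4*n) (0*n) = 1 := by simp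
        have c4 : Nat.choose (4*n) (4*n) = 1 := Nat.choose_self _
        rw [c0, c4]
        push_cast
        ring

theorem stmt_6 (n : ℕ) (hn : 0 < n) :
    (1 / (n : ℝ)) * ∑ ℓ ∈ Finset.range n,
        (Real.cos ((1 + 4 * ℓ) * Real.pi / (4 * n))) ^ (4 * n)
      = (1 / 16 ^ n) * ((Nat.choose (4 * n) (2 * n) : ℝ) - 2) := by
  have hC := mainC n hn
  have hR : (∑ ℓ ∈ range n, (Real.cos ((1 + 4*(ℓ:ℝ)) * Real.pi / (4*(n:ℝ)))) ^ (4*n)) * 2 ^ (4*n)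
      = n * ((Nat.choose (4*n) (2*n) : ℝ) - 2) := by exact_mod_cast hC
  have hn' : (n:ℝ) ≠ 0 := by exact_mod_cast hn.ne'
  have h16 : (16:ℝ)^n = 2^(4*n) := by rw [pow_mul]; norm_num
  rw [h16]
  have h2 : (2:ℝ)^(4*n) ≠ 0 := by positivity
  rw [(eq_div_iff h2).mpr hR]
  field_simp
end

section
/- For any real θ and natural numbers n, k with 2n+1 ≤ 2k+1 < 3(2n+1), the sum (1/(2n+1)) ∑_{ℓ=0}^{2n} (cos((θ+2πℓ)/(2n+1)))^{2k+1} equals (1/4^k)·C(2k+1, k−n)·cos θ. -/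
open Real Finset

open Complex in
lemma geom_aux (N : ℕ) (hN : 0 < N) (m : ℤ) (θ : ℝ) :
    ∑ ℓ ∈ Finset.range N, Complex.exp (Complex.I * m * ((θ + 2 * Real.pi * ℓ) / N)) =
      if (N:ℤ) ∣ m then N * Complex.exp (Complex.I * m * θ / N) else 0 := by
  have hNC : (N : ℂ) ≠ 0 := Nat.cast_ne_zero.mpr hN.ne'
  have hsplit : ∀ ℓ : ℕ, Complex.exp (Complex.I * m * ((θ + 2 * Real.pi * ℓ) / N)) =
      Complex.exp (Complex.I * m * θ / N) * (Complex.exp (Complex.I * m * (2 * Real.pi) / N)) ^ ℓ := by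
    intro ℓ
    rw [← Complex.exp_nat_mul, ← Complex.exp_add]
    ring_nf
  simp only [hsplit]
  rw [← Finset.mul_sum]
  set ζ := Complex.exp (Complex.I * m * (2 * Real.pi) / N) with hζ
  have hζN : ζ ^ N = 1 := by
    rw [← Complex.exp_nat_mul]
    have : (N:ℂ) * (Complex.I * m * (2 * Real.pi) / N) = m * (2 * Real.pi * Complex.I) := by
      field_simp
    rw [this]
    exact_mod_cast Complex.exp_int_mul_two_pi_mul_I m
  by_cases hdvd : (N:ℤ) ∣ m
  · obtain ⟨t, ht⟩ := id hdvd
    have : ζ = 1 := by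
      rw [hζ, ht]
      push_cast
      have : Complex.I * ((N:ℂ) * t) * (2 * Real.pi) / N = (t:ℂ) * (2 * Real.pi * Complex.I) := by
        field_simp
      rw [this]
      exact_mod_cast Complex.exp_int_mul_two_pi_mul_I t
    rw [if_pos hdvd, this]
    simp
    ring_nf
  · have hζ1 : ζ ≠ 1 := by
      intro h
      rw [hζ, Complex.exp_eq_one_iff] at h
      obtain ⟨t, ht⟩ := h
      apply hdvd
      refine ⟨t, ?_⟩
      have hπ : (Real.pi : ℂ) ≠ 0 := by exact_mod_cast Real.pi_ne_zero
      have : (m : ℂ) = N * t := by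
        field_simp at ht
        have h0 : (2 * (Real.pi:ℂ) * Complex.I) ≠ 0 := by
          simp [hπ, Complex.I_ne_zero]
        apply mul_left_cancel₀ h0
        linear_combination (2 * (Real.pi:ℂ) * Complex.I) * ht
      exact_mod_cast this
    rw [geom_sum_eq hζ1, hζN]
    rw [if_neg hdvd]
    simp

lemma cos_pow_eq (M : ℕ) (x : ℂ) :
    Complex.cos x ^ M = (1/2^M) * ∑ j ∈ Finset.range (M+1),
      (Nat.choose M j : ℂ) * Complex.exp (Complex.I * ((2*j : ℤ) - M) * x) := by
  rw [Complex.cos, div_pow, add_pow]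
  rw [Finset.sum_congr rfl (g := fun j => (Nat.choose M j : ℂ) * Complex.exp (Complex.I * ((2*j : ℤ) - M) * x)) ?_]
  · rw [div_eq_mul_inv, mul_comm, one_div]
  · intro j hj
    rw [Finset.mem_range] at hj
    have hj' : j ≤ M := by omega
    rw [← Complex.exp_nat_mul, ← Complex.exp_nat_mul, ← Complex.exp_add, mul_comm]
    congr 1
    push_cast [Nat.cast_sub hj']
    ring

theorem stmt_8 (θ : ℝ) (n k : ℕ) (h1 : n ≤ k) (h2 : 2 * k + 1 < 3 * (2 * n + 1)) :
    (1 / (2 * n + 1 : ℝ)) * ∑ ℓ ∈ Finset.range (2 * n + 1),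
        (Real.cos ((θ + 2 * Real.pi * ℓ) / (2 * n + 1))) ^ (2 * k + 1)
      = (1 / 4 ^ k) * (Nat.choose (2 * k + 1) (k - n) : ℝ) * Real.cos θ := by
  have hN : 0 < 2 * n + 1 := by omega
  have hNC : ((2 * n + 1 : ℕ) : ℂ) ≠ 0 := by exact_mod_cast (by omega : (2*n+1:ℕ) ≠ 0)
  set f : ℕ → ℂ := fun j => (Nat.choose (2*k+1) j : ℂ) *
      (if ((2*n+1 : ℕ):ℤ) ∣ (2*j - (2*k+1)) then
        ((2*n+1:ℕ):ℂ) * Complex.exp (Complex.I * ((2*j - (2*k+1) : ℤ)) * θ / (2*n+1:ℕ)) else 0)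
    with hf
  have key : ∑ ℓ ∈ Finset.range (2*n+1), (Complex.cos (((θ:ℂ) + 2*Real.pi*ℓ)/(2*n+1)))^(2*k+1)
      = ((2*n+1:ℕ):ℂ) * ((1/4^k) * (Nat.choose (2*k+1) (k-n)) * Complex.cos θ) := by
    have hMcast : ∀ ℓ : ℕ, (Complex.cos (((θ:ℂ) + 2*Real.pi*ℓ)/(2*n+1)))^(2*k+1)
        = (1/2^(2*k+1)) * ∑ j ∈ Finset.range (2*k+1+1),
          (Nat.choose (2*k+1) j : ℂ) *
            Complex.exp (Complex.I * ((2*j : ℤ) - (2*k+1)) * (((θ:ℂ) + 2*Real.pi*ℓ)/(2*n+1))) := by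
      intro ℓ
      have := cos_pow_eq (2*k+1) (((θ:ℂ) + 2*Real.pi*ℓ)/(2*n+1))
      convert this using 4
      push_cast; ring
    simp only [hMcast]
    rw [← Finset.mul_sum, Finset.sum_comm]
    have hinner : ∀ j ∈ Finset.range (2*k+1+1),
        (∑ ℓ ∈ Finset.range (2*n+1), (Nat.choose (2*k+1) j : ℂ) *
          Complex.exp (Complex.I * ((2*j : ℤ) - (2*k+1)) * (((θ:ℂ) + 2*Real.pi*ℓ)/(2*n+1)))) = f j := by
      intro j _
      rw [← Finset.mul_sum, hf]
      congr 1
      have := geom_aux (2*n+1) hN (2*j - (2*k+1)) θ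
      convert this using 3 with ℓ
      all_goals push_cast; ring_nf
    rw [Finset.sum_congr rfl hinner]
    have hsub : ({k-n, k+n+1} : Finset ℕ) ⊆ Finset.range (2*k+1+1) := by
      intro x hx
      simp only [Finset.mem_insert, Finset.mem_singleton] at hx
      rw [Finset.mem_range]
      omega
    have hzero : ∀ j ∈ Finset.range (2*k+1+1), j ∉ ({k-n, k+n+1} : Finset ℕ) → f j = 0 := by
      intro j hj hj'
      simp only [Finset.mem_insert, Finset.mem_singleton, not_or] at hj'
      rw [Finset.mem_range] at hj
      simp only [hf]
      have hj2 : (j:ℤ) ≤ 2*k+1 := by exact_mod_cast (by omega : j ≤ 2*k+1)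
      have hk2 : (2*(k:ℤ)+1) < 3*(2*(n:ℤ)+1) := by exact_mod_cast h2
      have hn0 : (0:ℤ) ≤ n := Int.ofNat_nonneg n
      have hnd : ¬ (2*(n:ℤ)+1) ∣ (2*(j:ℤ) - (2*(k:ℤ)+1)) := by
        rintro ⟨t, ht⟩
        have h3 : t < 3 := by nlinarith [ht, hj2, hk2, hn0]
        have h4 : -3 < t := by nlinarith [ht, hj2, hk2, hn0]
        interval_cases t <;> omega
      have hnd' : ¬ ((2*n+1 : ℕ):ℤ) ∣ (2*(j:ℤ) - (2*(k:ℤ)+1)) := by push_cast; exact hnd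
      simp only [hnd', if_false, mul_zero]
    rw [← Finset.sum_subset hsub hzero]
    have hne : (k - n) ≠ (k + n + 1) := by omega
    rw [Finset.sum_pair hne]
    have hd1 : ((2*n+1 : ℕ):ℤ) ∣ (2*((k-n:ℕ):ℤ) - (2*(k:ℤ)+1)) := by
      refine ⟨-1, ?_⟩; push_cast [Nat.cast_sub h1]; ring
    have hd2 : ((2*n+1 : ℕ):ℤ) ∣ (2*((k+n+1:ℕ):ℤ) - (2*(k:ℤ)+1)) := by
      refine ⟨1, ?_⟩; push_cast; ring
    have he1 : Complex.exp (Complex.I * ((2*((k-n:ℕ):ℤ) - (2*(k:ℤ)+1) : ℤ)) * θ / ((2*n+1:ℕ):ℂ))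
        = Complex.exp (-(θ * Complex.I)) := by
      have hNC' : ((2:ℂ)*n+1) ≠ 0 := by push_cast at hNC; exact hNC
      congr 1
      push_cast [Nat.cast_sub h1]
      rw [div_eq_iff hNC']
      ring
    have he2 : Complex.exp (Complex.I * ((2*((k+n+1:ℕ):ℤ) - (2*(k:ℤ)+1) : ℤ)) * θ / ((2*n+1:ℕ):ℂ))
        = Complex.exp (θ * Complex.I) := by
      have hNC' : ((2:ℂ)*n+1) ≠ 0 := by push_cast at hNC; exact hNC
      congr 1
      push_cast
      rw [div_eq_iff hNC']
      ring
    have hv1 : f (k-n) = (Nat.choose (2*k+1) (k-n) : ℂ) * (((2*n+1:ℕ):ℂ) * Complex.exp (-(θ * Complex.I))) := by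
      simp only [hf]
      rw [if_pos hd1, he1]
    have hv2 : f (k+n+1) = (Nat.choose (2*k+1) (k-n) : ℂ) * (((2*n+1:ℕ):ℂ) * Complex.exp (θ * Complex.I)) := by
      simp only [hf]
      rw [if_pos hd2, he2]
      congr 2
      rw [← Nat.choose_symm (by omega : k+n+1 ≤ 2*k+1)]
      congr 1
      omega
    rw [hv1, hv2, Complex.cos]
    have h2pow : (2:ℂ)^(2*k+1) = 2 * 4^k := by
      rw [pow_succ, pow_mul]; norm_num [mul_comm]
    rw [h2pow]
    push_cast
    ring
  rw [← Complex.ofReal_inj]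
  push_cast [Complex.ofReal_cos]
  push_cast at key
  rw [key]
  have hNC' : ((2:ℂ) * n + 1) ≠ 0 := by push_cast at hNC; exact hNC
  field_simp
end
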